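/- Let R be a Noetherian ring and I an ideal. The inner integral closure of I is an integrally closed ideal of R. -/

import Mathlib

/-- The integral closure of an ideal `I`: elements `x` satisfying a monic equation
`x^d + a 1 * x^(d-1) + ... + a d = 0` with `a j ∈ I^j` for `1 ≤ j ≤ d`. -/
def Ideal.intClosure {R : Type*} [CommRing R] (I : Ideal R) : Set R :=
  {x | ∃ (d : ℕ) (a : ℕ → R), 0 < d ∧ (∀ j, 1 ≤ j → j ≤ d → a j ∈ I ^ j) ∧
    x ^ d + ∑ j ∈ Finset.Icc 1 d, a j * x ^ (d - j) = 0}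

/-- The inner integral closure of an ideal `I`:
`{ r | ∃ n ≥ 1, r ^ n ∈ integral closure of I ^ (n+1) }`. -/
def Ideal.innerIntClosure {R : Type*} [CommRing R] (I : Ideal R) : Set R :=
  {r | ∃ n : ℕ, 1 ≤ n ∧ r ^ n ∈ (I ^ (n + 1)).intClosure}


open Polynomial Finset

namespace InnerIC

variable {R : Type*} [CommRing R]

theorem mem_intClosure_of_mem {A : Ideal R} {x : R} (h : x ∈ A) : x ∈ A.intClosure := by
  refine ⟨1, fun _ => -x, one_pos, ?_, ?_⟩
  · intro j h1 h2
    have hj : j = 1 := le_antisymm h2 h1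
    subst hj
    simpa using A.neg_mem h
  · simp

theorem intClosure_mono {A B : Ideal R} (h : A ≤ B) : A.intClosure ⊆ B.intClosure := by
  rintro x ⟨d, a, hd, ha, he⟩
  exact ⟨d, a, hd, fun j h1 h2 => Ideal.pow_right_mono h j (ha j h1 h2), he⟩

theorem mem_intClosure_of_subsingleton (h : Subsingleton R) (A : Ideal R) (x : R) :
    x ∈ A.intClosure :=
  ⟨1, fun _ => 0, one_pos, fun j _ _ => (A ^ j).zero_mem, Subsingleton.elim _ _⟩

theorem isIntegral_C_mul_X_pow {A : Type*} [CommRing A] [Algebra A R[X]]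
    (S : Subalgebra A R[X]) {x : R} {k d : ℕ} (hd : 0 < d) {a : ℕ → R}
    (hmem : ∀ j, 1 ≤ j → j ≤ d → C (a j) * X ^ (k * j) ∈ S)
    (heq : x ^ d + ∑ j ∈ Finset.Icc 1 d, a j * x ^ (d - j) = 0) :
    IsIntegral S (C x * X ^ k) := by
  classical
  set p : Polynomial S := X ^ d + ∑ j ∈ (Finset.Icc 1 d).attach,
      C (⟨C (a j.1) * X ^ (k * j.1),
        hmem j.1 (Finset.mem_Icc.mp j.2).1 (Finset.mem_Icc.mp j.2).2⟩ : S) * X ^ (d - j.1)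
      with hp
  refine ⟨p, ?_, ?_⟩
  · apply Polynomial.monic_X_pow_add
    refine lt_of_le_of_lt (Polynomial.degree_sum_le _ _) ?_
    rw [Finset.sup_lt_iff (by exact_mod_cast WithBot.bot_lt_coe d)]
    intro j _
    refine lt_of_le_of_lt (Polynomial.degree_C_mul_X_pow_le _ _) ?_
    exact_mod_cast Nat.sub_lt hd (Finset.mem_Icc.mp j.2).1
  · have hval : ∀ (y : S), algebraMap S R[X] y = (y : R[X]) := fun y => rfl
    rw [hp]
    simp only [eval₂_add, eval₂_pow, eval₂_X, eval₂_finset_sum, eval₂_mul, eval₂_C, hval]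
    have hterm : ∀ j ∈ (Finset.Icc 1 d).attach,
        (C (a j.1) * X ^ (k * j.1)) * (C x * X ^ k) ^ (d - j.1)
          = C (a j.1 * x ^ (d - j.1)) * X ^ (k * d) := by
      intro j _
      have hj := Finset.mem_Icc.mp j.2
      have hkd : k * j.1 + k * (d - j.1) = k * d := by
        rw [← Nat.mul_add, Nat.add_sub_cancel' hj.2]
      rw [mul_pow, ← C_pow, ← pow_mul, C_mul, ← hkd, pow_add]
      ring
    rw [Finset.sum_congr rfl hterm, ← Finset.sum_mul, ← map_sum,
      Finset.sum_attach (Finset.Icc 1 d) (fun j => a j * x ^ (d - j)),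
      mul_pow, ← C_pow, ← pow_mul, ← add_mul, ← C_add, heq]
    simp

theorem mem_intClosure_pow_iff (I : Ideal R) (k : ℕ) (x : R) :
    x ∈ (I ^ k).intClosure ↔ C x * X ^ k ∈ integralClosure (reesAlgebra I) R[X] := by
  constructor
  · rintro ⟨d, a, hd, ha, he⟩
    refine isIntegral_C_mul_X_pow (reesAlgebra I) hd (fun j h1 h2 => ?_) he
    rw [C_mul_X_pow_eq_monomial, reesAlgebra.monomial_mem, pow_mul]
    exact ha j h1 h2
  · intro h
    by_cases hs : Subsingleton R
    · exact mem_intClosure_of_subsingleton hs _ _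
    have : Nontrivial R := not_subsingleton_iff_nontrivial.mp hs
    obtain ⟨p, pm, pe⟩ := h
    set d := p.natDegree with hdd
    have hd : 0 < d := by
      rcases Nat.eq_zero_or_pos d with h0 | h0
      · exfalso
        have : p = 1 := (pm.natDegree_eq_zero).mp h0
        rw [this, eval₂_one] at pe
        exact one_ne_zero pe
      · exact h0
    have hval : ∀ (y : reesAlgebra I), algebraMap (reesAlgebra I) R[X] y = (y : R[X]) :=
      fun y => rfl
    rw [eval₂_eq_sum_range] at pe
    have pe2 := congrArg (fun q : R[X] => q.coeff (k * d)) pe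
    simp only [finset_sum_coeff, coeff_zero, hval] at pe2
    have hterm : ∀ i ∈ Finset.range (d + 1),
        (((p.coeff i : reesAlgebra I) : R[X]) * (C x * X ^ k) ^ i).coeff (k * d)
          = ((p.coeff i : reesAlgebra I) : R[X]).coeff (k * (d - i)) * x ^ i := by
      intro i hi
      have hi' : i ≤ d := Nat.lt_succ_iff.mp (Finset.mem_range.mp hi)
      rw [mul_pow, ← C_pow, ← pow_mul, ← mul_assoc, coeff_mul_X_pow', if_pos
        (Nat.mul_le_mul_left k hi'), coeff_mul_C, Nat.mul_sub]
    rw [Finset.sum_congr rfl hterm, Finset.sum_range_succ] at pe2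
    have htop : ((p.coeff d : reesAlgebra I) : R[X]).coeff (k * (d - d)) * x ^ d = x ^ d := by
      rw [hdd, pm.coeff_natDegree]
      simp
    rw [htop] at pe2
    refine ⟨d, fun j => ((p.coeff (d - j) : reesAlgebra I) : R[X]).coeff (k * j), hd,
      fun j h1 h2 => ?_, ?_⟩
    · rw [← pow_mul]
      exact (p.coeff (d - j)).2 (k * j)
    · have hre : ∑ j ∈ Finset.Icc 1 d,
          ((p.coeff (d - j) : reesAlgebra I) : R[X]).coeff (k * j) * x ^ (d - j)
          = ∑ i ∈ Finset.range d, ((p.coeff i : reesAlgebra I) : R[X]).coeff (k * (d - i)) * x ^ i := by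
        refine Finset.sum_nbij' (fun j => d - j) (fun i => d - i) ?_ ?_ ?_ ?_ ?_
        · intro j hj
          have := Finset.mem_Icc.mp hj
          exact Finset.mem_range.mpr (by omega)
        · intro i hi
          have := Finset.mem_range.mp hi
          exact Finset.mem_Icc.mpr (by omega)
        · intro j hj; have := Finset.mem_Icc.mp hj; omega
        · intro i hi; have := Finset.mem_range.mp hi; omega
        · intro j hj
          have := Finset.mem_Icc.mp hj
          rw [Nat.sub_sub_self (by omega)]
      rw [hre]
      linear_combination pe2
theorem intClosure_add {I : Ideal R} {k : ℕ} {x y : R} (hx : x ∈ (I ^ k).intClosure)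
    (hy : y ∈ (I ^ k).intClosure) : x + y ∈ (I ^ k).intClosure := by
  rw [mem_intClosure_pow_iff] at hx hy ⊢
  have := add_mem hx hy
  rwa [← add_mul, ← C_add] at this

theorem intClosure_smul {I : Ideal R} {k : ℕ} {c x : R} (hx : x ∈ (I ^ k).intClosure) :
    c * x ∈ (I ^ k).intClosure := by
  rw [mem_intClosure_pow_iff] at hx ⊢
  have hc : (C c : R[X]) ∈ integralClosure (reesAlgebra I) R[X] := by
    have : (C c : R[X]) ∈ reesAlgebra I := by
      have := (reesAlgebra I).algebraMap_mem c
      rwa [Polynomial.algebraMap_eq] at this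
    exact Subalgebra.algebraMap_mem _ (⟨C c, this⟩ : reesAlgebra I)
  have := mul_mem hc hx
  rwa [← mul_assoc, ← C_mul] at this

theorem intClosure_mul {I : Ideal R} {k l : ℕ} {x y : R} (hx : x ∈ (I ^ k).intClosure)
    (hy : y ∈ (I ^ l).intClosure) : x * y ∈ (I ^ (k + l)).intClosure := by
  rw [mem_intClosure_pow_iff] at hx hy ⊢
  have := mul_mem hx hy
  rwa [show (C x * X ^ k) * (C y * X ^ l) = C (x * y) * X ^ (k + l) by
    rw [C_mul, pow_add]; ring] at this

theorem intClosure_pow {I : Ideal R} {k : ℕ} {x : R} (hx : x ∈ (I ^ k).intClosure) (m : ℕ) :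
    x ^ m ∈ (I ^ (k * m)).intClosure := by
  induction m with
  | zero =>
      rw [pow_zero, Nat.mul_zero, pow_zero, Ideal.one_eq_top]
      exact mem_intClosure_of_mem Submodule.mem_top
  | succ t ih =>
      have := intClosure_mul ih hx
      rw [← pow_succ] at this
      rwa [Nat.mul_succ]

/-- The integral closure of `I ^ k` as an ideal. -/
def closureIdeal (I : Ideal R) (k : ℕ) : Ideal R where
  carrier := (I ^ k).intClosure
  zero_mem' := mem_intClosure_of_mem (Submodule.zero_mem _)
  add_mem' := intClosure_add
  smul_mem' := fun c x hx => by simpa [smul_eq_mul] using intClosure_smul (c := c) hx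

theorem mem_closureIdeal_iff {I : Ideal R} {k : ℕ} {x : R} :
    x ∈ closureIdeal I k ↔ x ∈ (I ^ k).intClosure := Iff.rfl

theorem closureIdeal_anti {I : Ideal R} {k l : ℕ} (h : k ≤ l) :
    closureIdeal I l ≤ closureIdeal I k :=
  fun _ hx => intClosure_mono (Ideal.pow_le_pow_right h) hx

theorem closureIdeal_pow_le (I : Ideal R) (k j : ℕ) :
    closureIdeal I k ^ j ≤ closureIdeal I (k * j) := by
  induction j with
  | zero =>
      intro z _
      rw [mem_closureIdeal_iff, Nat.mul_zero, pow_zero, Ideal.one_eq_top]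
      exact mem_intClosure_of_mem Submodule.mem_top
  | succ t ih =>
      rw [pow_succ, Nat.mul_succ]
      refine le_trans (Ideal.mul_mono ih le_rfl) (Ideal.mul_le.mpr fun a ha b hb => ?_)
      exact intClosure_mul ha hb

theorem intClosure_trans {I : Ideal R} {L : ℕ} {z : R}
    (h : z ∈ (closureIdeal I L).intClosure) : z ∈ (I ^ L).intClosure := by
  obtain ⟨d, a, hd, ha, he⟩ := h
  have hm : ∀ j, 1 ≤ j → j ≤ d →
      C (a j) * X ^ (L * j) ∈ integralClosure (reesAlgebra I) R[X] := fun j h1 h2 =>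
    (mem_intClosure_pow_iff I (L * j) (a j)).mp (closureIdeal_pow_le I L j (ha j h1 h2))
  have hint : IsIntegral (integralClosure (reesAlgebra I) R[X]) (C z * X ^ L) :=
    isIntegral_C_mul_X_pow _ hd hm he
  have hmem : C z * X ^ L ∈ integralClosure (integralClosure (reesAlgebra I) R[X]) R[X] := hint
  rw [integralClosure_idem, Algebra.mem_bot] at hmem
  obtain ⟨t, ht⟩ := hmem
  rw [mem_intClosure_pow_iff]
  exact ht ▸ t.2
theorem pow_mem_closure {I : Ideal R} {n : ℕ} {r : R} (hn : 0 < n)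
    (h : r ^ n ∈ (I ^ (n + 1)).intClosure) (a : ℕ) :
    r ^ a ∈ closureIdeal I ((n + 1) * (a / n)) := by
  have hra : r ^ a = (r ^ n) ^ (a / n) * r ^ (a % n) := by
    rw [← pow_mul, ← pow_add, Nat.div_add_mod]
  rw [hra, mul_comm ((r ^ n) ^ (a / n)) (r ^ (a % n))]
  exact (closureIdeal I _).smul_mem _ (intClosure_pow h (a / n))

theorem Smem_mul {I : Ideal R} {n t : ℕ} {r : R} (h : r ^ n ∈ (I ^ (n + 1)).intClosure)
    (ht : 1 ≤ t) : r ^ (n * t) ∈ (I ^ (n * t + 1)).intClosure := by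
  have h1 : (r ^ n) ^ t ∈ (I ^ ((n + 1) * t)).intClosure := intClosure_pow h t
  rw [← pow_mul] at h1
  refine intClosure_mono (Ideal.pow_le_pow_right ?_) h1
  have : (n + 1) * t = n * t + t := by ring
  omega

theorem div_add_div_ge {N k p : ℕ} (hN : 0 < N) (hk : k ≤ p) (hp : p = N * (N + 2)) :
    N + 1 ≤ k / N + (p - k) / N := by
  have h1 := Nat.div_add_mod k N
  have h2 := Nat.div_add_mod (p - k) N
  have h3 : k % N < N := Nat.mod_lt _ hN
  have h4 : (p - k) % N < N := Nat.mod_lt _ hN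
  by_contra hcon
  push_neg at hcon
  have hcon' : k / N + (p - k) / N ≤ N := by omega
  have hmul : N * (k / N + (p - k) / N) ≤ N * N := Nat.mul_le_mul_left N hcon'
  rw [Nat.mul_add] at hmul
  have hpk : k + (p - k) = p := by omega
  nlinarith [h1, h2, h3, h4, hmul, hpk, hp]

theorem inner_add_mem {I : Ideal R} {x y : R} (hx' : x ∈ I.innerIntClosure)
    (hy' : y ∈ I.innerIntClosure) : x + y ∈ I.innerIntClosure := by
  obtain ⟨n, hn, hx⟩ := hx'
  obtain ⟨m, hm, hy⟩ := hy'
  have hxN : x ^ (n * m) ∈ (I ^ (n * m + 1)).intClosure := Smem_mul hx hm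
  have hyN : y ^ (n * m) ∈ (I ^ (n * m + 1)).intClosure := by
    rw [Nat.mul_comm]
    exact Smem_mul hy hn
  set N := n * m with hNdef
  have hN : 0 < N := Nat.mul_pos hn hm
  set p := N * (N + 2) with hpdef
  have hp1 : 1 ≤ p := Nat.mul_pos hN (by omega)
  refine ⟨p, hp1, ?_⟩
  have hmem : (x + y) ^ p ∈ closureIdeal I (p + 1) := by
    rw [add_pow]
    refine Submodule.sum_mem _ fun i hi => ?_
    have hi' : i ≤ p := Nat.lt_succ_iff.mp (Finset.mem_range.mp hi)
    have t1 : x ^ i ∈ closureIdeal I ((N + 1) * (i / N)) := pow_mem_closure hN hxN i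
    have t2 : y ^ (p - i) ∈ closureIdeal I ((N + 1) * ((p - i) / N)) :=
      pow_mem_closure hN hyN (p - i)
    have t3 : x ^ i * y ^ (p - i) ∈
        (I ^ ((N + 1) * (i / N) + (N + 1) * ((p - i) / N))).intClosure :=
      intClosure_mul t1 t2
    have t4 : p + 1 ≤ (N + 1) * (i / N) + (N + 1) * ((p - i) / N) := by
      rw [← Nat.mul_add]
      have := div_add_div_ge hN hi' hpdef
      calc p + 1 = (N + 1) * (N + 1) := by rw [hpdef]; ring
        _ ≤ (N + 1) * (i / N + (p - i) / N) := Nat.mul_le_mul_left _ this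
    have t5 : x ^ i * y ^ (p - i) ∈ closureIdeal I (p + 1) :=
      closureIdeal_anti t4 t3
    exact Ideal.mul_mem_right _ _ t5
  exact hmem

/-- The inner integral closure as an ideal. -/
def innerIdeal (I : Ideal R) : Ideal R where
  carrier := I.innerIntClosure
  zero_mem' := ⟨1, le_rfl, by
    rw [pow_one]
    exact mem_intClosure_of_mem (Submodule.zero_mem _)⟩
  smul_mem' := by
    rintro c x ⟨n, hn, h⟩
    refine ⟨n, hn, ?_⟩
    rw [smul_eq_mul, mul_pow]
    exact intClosure_smul h
  add_mem' := inner_add_mem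
theorem prod_mem_closure {I : Ideal R} {β : Type*} (F : Finset β) (g : β → R) (e : β → ℕ)
    (h : ∀ b ∈ F, g b ∈ closureIdeal I (e b)) :
    ∏ b ∈ F, g b ∈ closureIdeal I (∑ b ∈ F, e b) := by
  classical
  induction F using Finset.cons_induction with
  | empty =>
      rw [Finset.prod_empty, Finset.sum_empty, mem_closureIdeal_iff, pow_zero, Ideal.one_eq_top]
      exact mem_intClosure_of_mem Submodule.mem_top
  | cons a F ha ih =>
      rw [Finset.prod_cons, Finset.sum_cons]
      exact intClosure_mul (h a (Finset.mem_cons_self a F))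
        (ih fun b hb => h b (Finset.mem_cons.mpr (Or.inr hb)))

theorem span_pow_le {I : Ideal R} (s : Finset R) {n : ℕ} (hn : 0 < n)
    (h : ∀ r ∈ s, r ^ n ∈ (I ^ (n + 1)).intClosure) :
    Ideal.span (s : Set R) ^ (n * ((n + 1) * s.card + 1)) ≤
      closureIdeal I (n * ((n + 1) * s.card + 1) + 1) := by
  classical
  set k := s.card with hk
  set m := n * ((n + 1) * k + 1) with hm
  rw [Ideal.span, Submodule.span_pow]
  refine Submodule.span_le.mpr ?_
  rintro w hw
  obtain ⟨f, rfl⟩ := Set.mem_pow.mp hw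
  rw [SetLike.mem_coe, List.prod_ofFn]
  set g : Fin m → R := fun i => (f i : R) with hg
  have hprod : ∏ i, g i = ∏ b ∈ Finset.univ.image g, b ^ #{i ∈ Finset.univ | g i = b} :=
    Finset.prod_comp (fun b => b) g
  set F := Finset.univ.image g with hF
  set c : R → ℕ := fun b => #{i ∈ Finset.univ | g i = b} with hc
  have sum_c : ∑ b ∈ F, c b = m := by
    have := Finset.card_eq_sum_card_image g (Finset.univ : Finset (Fin m))
    simpa using this.symm
  have hFs : F ⊆ s := by
    intro b hb
    obtain ⟨i, _, rfl⟩ := Finset.mem_image.mp hb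
    exact Finset.mem_coe.mp (f i).2
  have hFk : F.card ≤ k := Finset.card_le_card hFs
  have hmem : ∏ b ∈ F, b ^ c b ∈ closureIdeal I (∑ b ∈ F, (n + 1) * (c b / n)) := by
    refine prod_mem_closure F _ _ fun b hb => ?_
    exact pow_mem_closure hn (h b (hFs hb)) (c b)
  set Q := ∑ b ∈ F, c b / n with hQ
  have hsplit : ∑ b ∈ F, (n + 1) * (c b / n) = (n + 1) * Q := by rw [Finset.mul_sum]
  have hsum : m + F.card ≤ n * Q + F.card * n := by
    calc m + F.card = ∑ b ∈ F, c b + ∑ _b ∈ F, 1 := by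
            rw [sum_c, Finset.sum_const, smul_eq_mul, mul_one]
      _ = ∑ b ∈ F, (c b + 1) := Finset.sum_add_distrib.symm
      _ ≤ ∑ b ∈ F, (n * (c b / n) + n) := by
            refine Finset.sum_le_sum fun b _ => ?_
            have e1 := Nat.div_add_mod (c b) n
            have e2 : c b % n < n := Nat.mod_lt _ hn
            linarith
      _ = n * Q + F.card * n := by
            rw [Finset.sum_add_distrib, ← Finset.mul_sum, Finset.sum_const, smul_eq_mul]
  have hQge : n * k + 1 ≤ Q := by
    have key : n * (n * k + 1) + F.card * n ≤ n * Q + F.card * n := by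
      calc n * (n * k + 1) + F.card * n ≤ n * (n * k + 1) + k * n := by
            have := Nat.mul_le_mul_right n hFk; omega
        _ = m := by rw [hm]; ring
        _ ≤ m + F.card := Nat.le_add_right _ _
        _ ≤ n * Q + F.card * n := hsum
    exact Nat.le_of_mul_le_mul_left (Nat.le_of_add_le_add_right key) hn
  have hfin : m + 1 ≤ ∑ b ∈ F, (n + 1) * (c b / n) := by
    rw [hsplit]
    calc m + 1 = (n + 1) * (n * k + 1) := by rw [hm]; ring
      _ ≤ (n + 1) * Q := Nat.mul_le_mul_left _ hQge
  rw [hprod]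
  exact closureIdeal_anti hfin hmem

end InnerIC

theorem innerIC_main {R : Type*} [CommRing R] [IsNoetherianRing R] (I : Ideal R) :
    ∃ J : Ideal R, (J : Set R) = I.innerIntClosure ∧ J.intClosure = (J : Set R) := by
  classical
  refine ⟨InnerIC.innerIdeal I, rfl, ?_⟩
  apply Set.Subset.antisymm
  · intro x hx
    obtain ⟨s, hs⟩ := IsNoetherian.noetherian (InnerIC.innerIdeal I)
    set P : R → Prop := fun r => ∃ n : ℕ, 1 ≤ n ∧ r ^ n ∈ (I ^ (n + 1)).intClosure with hP
    set g : R → ℕ := fun r => if hr : P r then hr.choose else 1 with hg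
    have hg1 : ∀ r, 1 ≤ g r := by
      intro r
      rw [hg]
      dsimp only
      by_cases hr : P r
      · rw [dif_pos hr]
        exact hr.choose_spec.1
      · rw [dif_neg hr]
    have hgmem : ∀ r ∈ s, r ^ g r ∈ (I ^ (g r + 1)).intClosure := by
      intro r hr
      have hrJ : P r := by
        have h1 : r ∈ Ideal.span (s : Set R) := Ideal.subset_span hr
        have h2 : r ∈ InnerIC.innerIdeal I := by rw [← hs]; exact h1
        exact h2
      rw [hg]
      dsimp only
      rw [dif_pos hrJ]
      exact hrJ.choose_spec.2
    set n : ℕ := ∏ r ∈ s, g r with hn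
    have hn1 : 0 < n := Finset.prod_pos fun r _ => hg1 r
    have hcommon : ∀ r ∈ s, r ^ n ∈ (I ^ (n + 1)).intClosure := by
      intro r hr
      obtain ⟨t, ht⟩ := Finset.dvd_prod_of_mem g hr
      have ht1 : 1 ≤ t := by
        rcases Nat.eq_zero_or_pos t with h0 | h0
        · rw [h0, Nat.mul_zero] at ht; omega
        · exact h0
      rw [hn, ht]
      exact InnerIC.Smem_mul (hgmem r hr) ht1
    set m := n * ((n + 1) * s.card + 1) with hm
    have hm1 : 1 ≤ m := Nat.mul_pos hn1 (by omega)
    have hJm : InnerIC.innerIdeal I ^ m ≤ InnerIC.closureIdeal I (m + 1) := by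
      rw [← hs]
      exact InnerIC.span_pow_le s hn1 hcommon
    have hx1 : x ∈ ((InnerIC.innerIdeal I) ^ 1).intClosure := by rwa [pow_one]
    rw [InnerIC.mem_intClosure_pow_iff] at hx1
    have hxm : x ^ m ∈ ((InnerIC.innerIdeal I) ^ m).intClosure := by
      rw [InnerIC.mem_intClosure_pow_iff]
      have h2 := pow_mem hx1 m
      rwa [mul_pow, ← Polynomial.C_pow, ← pow_mul, Nat.one_mul] at h2
    have hxm2 : x ^ m ∈ (InnerIC.closureIdeal I (m + 1)).intClosure :=
      InnerIC.intClosure_mono hJm hxm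
    have hxm3 : x ^ m ∈ (I ^ (m + 1)).intClosure := InnerIC.intClosure_trans hxm2
    exact ⟨m, hm1, hxm3⟩
  · intro x hx
    exact InnerIC.mem_intClosure_of_mem hx

/-- The inner integral closure of `I` is an integrally closed ideal of `R`. -/
theorem stmt6 {R : Type*} [CommRing R] [IsNoetherianRing R] (I : Ideal R) :
    ∃ J : Ideal R, (J : Set R) = I.innerIntClosure ∧ J.intClosure = (J : Set R) :=
  innerIC_main I
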